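/- Suppose the trials i = 1,…,K are partitioned into regimes g = 1,…,G, and suppose there exists β⋆ ∈ ℝ^p such that, writing ε = y − Zβ⋆ and X = [Z A] (the K×(p+q) matrix with rows X_i), the within-regime weighted orthogonality Σ_{i ∈ g} w_i ε_i X_i = 0 holds for every regime g. Define r_i(β,γ) = y_i − Z_iᵀβ − A_iᵀγ, the average loss L_avg(β,γ) = (Σ_i w_i r_i(β,γ)²)/(Σ_i w_i), the regime losses L_g(β,γ) = (Σ_{i∈g} w_i r_i(β,γ)²)/(Σ_{i∈g} w_i), and the hard worst-regime loss L_max(β,γ) = max_{g=1,…,G} L_g(β,γ). Then for every ρ ∈ [0,1] and every λ_γ ≥ 0, the point (β⋆, 0) is a global minimizer of F(β,γ) = (1−ρ) L_avg(β,γ) + ρ L_max(β,γ) + λ_γ ‖γ‖²; moreover, if ρ < 1 and XᵀWX is positive definite, then (β⋆, 0) is the unique global minimizer of F. -/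

import Mathlib

open Matrix BigOperators

/-- Finite-trial consistency of the AMT-MA blended objective with the hard
worst-regime (minimax) loss when the anchor is null: under within-regime
weighted orthogonality of the residuals `ε = y - Zβ⋆` to the joint design
`X = [Z A]`, the point `(β⋆, 0)` globally minimises
`F(β,γ) = (1-ρ) L_avg + ρ L_max + λ_γ ‖γ‖²` for every `ρ ∈ [0,1]`, `λ_γ ≥ 0`;
and if `ρ < 1` and `XᵀWX` is positive definite, it is the unique minimiser. -/
theorem amtma_minimax_consistency_null_anchor
    {K G p q : ℕ} [Nonempty (Fin G)]
    (y : Fin K → ℝ) (Z : Matrix (Fin K) (Fin p) ℝ) (A : Matrix (Fin K) (Fin q) ℝ)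
    (w : Fin K → ℝ) (hw : ∀ i, 0 < w i)
    (reg : Fin K → Fin G) (hreg : ∀ g : Fin G, ∃ i, reg i = g)
    (βs : Fin p → ℝ)
    (X : Matrix (Fin K) (Fin (p + q)) ℝ)
    (hX : ∀ i, X i = Fin.append (Z i) (A i))
    (ε : Fin K → ℝ)
    (hε : ∀ i, ε i = y i - ∑ k, Z i k * βs k)
    (horth : ∀ (g : Fin G) (j : Fin (p + q)),
      ∑ i ∈ Finset.univ.filter (fun i => reg i = g), w i * ε i * X i j = 0)
    (r : (Fin p → ℝ) → (Fin q → ℝ) → Fin K → ℝ)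
    (hr : ∀ β γ i, r β γ i = y i - ∑ k, Z i k * β k - ∑ k, A i k * γ k)
    (Lavg : (Fin p → ℝ) → (Fin q → ℝ) → ℝ)
    (hLavg : ∀ β γ, Lavg β γ = (∑ i, w i * (r β γ i) ^ 2) / (∑ i, w i))
    (Lg : Fin G → (Fin p → ℝ) → (Fin q → ℝ) → ℝ)
    (hLg : ∀ g β γ, Lg g β γ =
      (∑ i ∈ Finset.univ.filter (fun i => reg i = g), w i * (r β γ i) ^ 2) /
      (∑ i ∈ Finset.univ.filter (fun i => reg i = g), w i))
    (Lmax : (Fin p → ℝ) → (Fin q → ℝ) → ℝ)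
    (hLmax : ∀ β γ, Lmax β γ =
      Finset.univ.sup' Finset.univ_nonempty (fun g : Fin G => Lg g β γ))
    (ρ lγ : ℝ) (hρ : ρ ∈ Set.Icc (0 : ℝ) 1) (hlγ : 0 ≤ lγ)
    (F : (Fin p → ℝ) → (Fin q → ℝ) → ℝ)
    (hF : ∀ β γ, F β γ =
      (1 - ρ) * Lavg β γ + ρ * Lmax β γ + lγ * ∑ j, (γ j) ^ 2) :
    (∀ β γ, F βs 0 ≤ F β γ) ∧
    (ρ < 1 → (Xᵀ * Matrix.diagonal w * X).PosDef →
      ∀ β γ, (β, γ) ≠ (βs, (0 : Fin q → ℝ)) → F βs 0 < F β γ) := by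
  classical
  obtain ⟨hρ0, hρ1⟩ := hρ
  set δ : (Fin p → ℝ) → (Fin q → ℝ) → Fin (p + q) → ℝ :=
    fun β γ => Fin.append (fun k => β k - βs k) γ with hδ
  have hrδ : ∀ β γ i, r β γ i = ε i - ∑ j, X i j * δ β γ j := by
    intro β γ i
    rw [hr, hε, hX]
    rw [Fin.sum_univ_add]
    simp only [hδ, Fin.append_left, Fin.append_right]
    simp only [mul_sub, Finset.sum_sub_distrib]
    ring
  have hr0 : ∀ i, r βs 0 i = ε i := by
    intro i; rw [hr, hε]; simp
  have key : ∀ (s : Finset (Fin K)),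
      (∀ j, ∑ i ∈ s, w i * ε i * X i j = 0) → ∀ β γ,
      ∑ i ∈ s, w i * (r β γ i) ^ 2 =
        ∑ i ∈ s, w i * (ε i) ^ 2 + ∑ i ∈ s, w i * (∑ j, X i j * δ β γ j) ^ 2 := by
    intro s hs β γ
    have cross : ∑ i ∈ s, w i * ε i * (∑ j, X i j * δ β γ j) = 0 := by
      have h1 : ∑ i ∈ s, w i * ε i * (∑ j, X i j * δ β γ j)
          = ∑ j, (∑ i ∈ s, w i * ε i * X i j) * δ β γ j := by
        calc ∑ i ∈ s, w i * ε i * ∑ j, X i j * δ β γ j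
            = ∑ i ∈ s, ∑ j, w i * ε i * X i j * δ β γ j := by
              refine Finset.sum_congr rfl fun i _ => ?_
              rw [Finset.mul_sum]
              exact Finset.sum_congr rfl fun j _ => by ring
          _ = ∑ j, ∑ i ∈ s, w i * ε i * X i j * δ β γ j := Finset.sum_comm
          _ = ∑ j, (∑ i ∈ s, w i * ε i * X i j) * δ β γ j := by
              exact Finset.sum_congr rfl fun j _ => (Finset.sum_mul ..).symm
      rw [h1]; simp [hs]
    have expand : ∀ i ∈ s, w i * (r β γ i) ^ 2 =
        w i * (ε i) ^ 2 + w i * (∑ j, X i j * δ β γ j) ^ 2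
          - 2 * (w i * ε i * (∑ j, X i j * δ β γ j)) := by
      intro i _
      rw [hrδ]; ring
    rw [Finset.sum_congr rfl expand, Finset.sum_sub_distrib, Finset.sum_add_distrib,
      ← Finset.mul_sum, cross]
    ring
  have hden : ∀ g : Fin G, 0 < ∑ i ∈ Finset.univ.filter (fun i => reg i = g), w i := by
    intro g
    obtain ⟨i, hi⟩ := hreg g
    exact Finset.sum_pos (fun i _ => hw i) ⟨i, by simp [hi]⟩
  have hdenT : 0 < ∑ i, w i := by
    obtain ⟨i, -⟩ := hreg (Classical.arbitrary (Fin G))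
    exact Finset.sum_pos (fun i _ => hw i) ⟨i, Finset.mem_univ i⟩
  have horthT : ∀ j, ∑ i, w i * ε i * X i j = 0 := by
    intro j
    rw [← Finset.sum_fiberwise Finset.univ reg (fun i => w i * ε i * X i j)]
    simp [horth]
  have num_le : ∀ (s : Finset (Fin K)),
      (∀ j, ∑ i ∈ s, w i * ε i * X i j = 0) → ∀ β γ,
      ∑ i ∈ s, w i * (r βs 0 i) ^ 2 ≤ ∑ i ∈ s, w i * (r β γ i) ^ 2 := by
    intro s hs β γ
    rw [key s hs β γ]
    have h0 : ∑ i ∈ s, w i * (r βs 0 i) ^ 2 = ∑ i ∈ s, w i * (ε i) ^ 2 := by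
      exact Finset.sum_congr rfl fun i _ => by rw [hr0]
    rw [h0]
    have : 0 ≤ ∑ i ∈ s, w i * (∑ j, X i j * δ β γ j) ^ 2 :=
      Finset.sum_nonneg fun i _ => mul_nonneg (hw i).le (sq_nonneg _)
    linarith
  have hLg_le : ∀ g β γ, Lg g βs 0 ≤ Lg g β γ := by
    intro g β γ
    rw [hLg, hLg]
    exact (div_le_div_iff_of_pos_right (hden g)).mpr (num_le _ (horth g) β γ)
  have hLmax_le : ∀ β γ, Lmax βs 0 ≤ Lmax β γ := by
    intro β γ
    rw [hLmax, hLmax]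
    exact Finset.sup'_mono_fun fun g _ => hLg_le g β γ
  have hLavg_le : ∀ β γ, Lavg βs 0 ≤ Lavg β γ := by
    intro β γ
    rw [hLavg, hLavg]
    exact (div_le_div_iff_of_pos_right hdenT).mpr (num_le _ horthT β γ)
  have hγ0 : lγ * ∑ j, ((0 : Fin q → ℝ) j) ^ 2 = 0 := by simp
  constructor
  · intro β γ
    rw [hF, hF, hγ0]
    have h1 : (1 - ρ) * Lavg βs 0 ≤ (1 - ρ) * Lavg β γ :=
      mul_le_mul_of_nonneg_left (hLavg_le β γ) (by linarith)
    have h2 : ρ * Lmax βs 0 ≤ ρ * Lmax β γ :=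
      mul_le_mul_of_nonneg_left (hLmax_le β γ) hρ0
    have h3 : 0 ≤ lγ * ∑ j, (γ j) ^ 2 :=
      mul_nonneg hlγ (Finset.sum_nonneg fun j _ => sq_nonneg _)
    linarith
  · intro hρlt hpd β γ hne
    -- δ β γ ≠ 0
    have hδne : δ β γ ≠ 0 := by
      intro h
      apply hne
      have hβ : β = βs := by
        funext k
        have := congrFun h (Fin.castAdd q k)
        simp [hδ, Fin.append_left] at this
        linarith
      have hγ : γ = 0 := by
        funext k
        have := congrFun h (Fin.natAdd p k)
        simpa [hδ, Fin.append_right] using this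
      rw [hβ, hγ]
    have quad : ∀ x : Fin (p + q) → ℝ,
        star x ⬝ᵥ ((Xᵀ * Matrix.diagonal w * X) *ᵥ x) = ∑ i, w i * (∑ j, X i j * x j) ^ 2 := by
      intro x
      rw [Matrix.mul_assoc, ← Matrix.mulVec_mulVec, ← Matrix.mulVec_mulVec]
      rw [show (star x : Fin (p+q) → ℝ) = x from rfl]
      rw [Matrix.dotProduct_mulVec, Matrix.vecMul_transpose]
      simp only [dotProduct]
      refine Finset.sum_congr rfl fun i _ => ?_
      rw [Matrix.mulVec_diagonal]
      simp only [Matrix.mulVec, dotProduct]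
      ring
    have hpos : 0 < ∑ i, w i * (∑ j, X i j * δ β γ j) ^ 2 := by
      rw [← quad]
      exact hpd.dotProduct_mulVec_pos hδne
    have numlt : ∑ i, w i * (r βs 0 i) ^ 2 < ∑ i, w i * (r β γ i) ^ 2 := by
      rw [key Finset.univ horthT β γ]
      have h0 : ∑ i, w i * (r βs 0 i) ^ 2 = ∑ i, w i * (ε i) ^ 2 :=
        Finset.sum_congr rfl fun i _ => by rw [hr0]
      rw [h0]; linarith
    have hLavg_lt : Lavg βs 0 < Lavg β γ := by
      rw [hLavg, hLavg]
      exact (div_lt_div_iff_of_pos_right hdenT).mpr numlt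
    rw [hF, hF, hγ0]
    have h1 : (1 - ρ) * Lavg βs 0 < (1 - ρ) * Lavg β γ :=
      mul_lt_mul_of_pos_left hLavg_lt (by linarith)
    have h2 : ρ * Lmax βs 0 ≤ ρ * Lmax β γ :=
      mul_le_mul_of_nonneg_left (hLmax_le β γ) hρ0
    have h3 : 0 ≤ lγ * ∑ j, (γ j) ^ 2 :=
      mul_nonneg hlγ (Finset.sum_nonneg fun j _ => sq_nonneg _)
    linarith
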